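/- Let n ≥ 2 and 1 ≤ n₁ < n be integers. Let S be the following finite set of ℝ-linear endomorphisms of A = ℝ[x₁,…,xₙ]: f ↦ −x_i·∂f/∂x_r for 1 ≤ i < r ≤ n₁; f ↦ −x_i·x_s·f for 1 ≤ i ≤ n₁ < s ≤ n; and f ↦ x_s·∂f/∂x_j for n₁ < j < s ≤ n. For a polynomial v ∈ A and k ∈icons ℕ, let W_k(v) be the ℝ-linear span of all polynomials T₁(T₂(⋯T_j(v)⋯)) with 0 ≤ j ≤ k and T₁,…,T_j ∈ S. Then: (i) for every integer m₁ ≥ 1, with v = x_{n₁}^{m₁}, there exist real constants c₁, c₂ > 0 and K ∈ ℕ such that c₁·k^{n−1} ≤ dim W_k(v) ≤ c₂·k^{n−1} for all k ≥ K; and (ii) for every m₂ ∈ ℕ, the same conclusion holds with v = x_{n₁+1}^{m₂}. -/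

import Mathlib

open MvPolynomial

/-- Multiplication by a polynomial, as an ℝ-linear endomorphism. -/
noncomputable def mulE {σ : Type} (a : MvPolynomial σ ℝ) :
    Module.End ℝ (MvPolynomial σ ℝ) := LinearMap.mulLeft ℝ a

/-- Formal partial derivative ∂/∂v, as an ℝ-linear endomorphism. -/
noncomputable def pdE {σ : Type} [DecidableEq σ] (v : σ) :
    Module.End ℝ (MvPolynomial σ ℝ) := (pderiv v).toLinearMap

/-- The set S of negative-root-vector endomorphisms of A = ℝ[x₁,…,xₙ] for Howe's
non-canonical oscillator representation associated to n₁ (0-based indexing: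
1 ≤ i < r ≤ n₁ becomes i < r, r.val < n₁; 1 ≤ i ≤ n₁ < s ≤ n becomes
i.val < n₁ ≤ s.val; n₁ < j < s ≤ n becomes n₁ ≤ j.val, j < s). -/
def Sset (n n₁ : ℕ) : Set (Module.End ℝ (MvPolynomial (Fin n) ℝ)) :=
  {T | (∃ i r : Fin n, i < r ∧ r.val < n₁ ∧
          T = -(mulE (X i) * pdE r)) ∨
       (∃ i s : Fin n, i.val < n₁ ∧ n₁ ≤ s.val ∧
          T = -mulE (X i * X s)) ∨
       (∃ j s : Fin n, n₁ ≤ j.val ∧ j < s ∧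
          T = mulE (X s) * pdE j)}

/-- W_k(v): span of all T₁(T₂(⋯T_j(v)⋯)) with 0 ≤ j ≤ k, T's in S. -/
noncomputable def Wk (n : ℕ) (S : Set (Module.End ℝ (MvPolynomial (Fin n) ℝ)))
    (v : MvPolynomial (Fin n) ℝ) (k : ℕ) : Submodule ℝ (MvPolynomial (Fin n) ℝ) :=
  Submodule.span ℝ
    {f | ∃ l : List (Module.End ℝ (MvPolynomial (Fin n) ℝ)),
      l.length ≤ k ∧ (∀ T ∈ l, T ∈ S) ∧ f = l.prod v}

namespace St16

variable {n : ℕ}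

/-- weight -/
def wt (n₁ : ℕ) (α : Fin n →₀ ℕ) : ℤ := ∑ i : Fin n, (if (i : ℕ) < n₁ then (-1 : ℤ) else 1) * α i

/-- total degree -/
def dg (α : Fin n →₀ ℕ) : ℕ := ∑ i : Fin n, α i

lemma wt_add (n₁ : ℕ) (α β : Fin n →₀ ℕ) : wt n₁ (α + β) = wt n₁ α + wt n₁ β := by
  simp [wt, mul_add, Finset.sum_add_distrib]

lemma dg_add (α β : Fin n →₀ ℕ) : dg (α + β) = dg α + dg β := by
  simp [dg, Finset.sum_add_distrib]

lemma wt_single (n₁ : ℕ) (p : Fin n) (m : ℕ) :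
    wt n₁ (Finsupp.single p m) = (if (p : ℕ) < n₁ then (-1 : ℤ) else 1) * m := by
  rw [wt, Finset.sum_eq_single p]
  · simp
  · intro b _ hb; simp [Finsupp.single_apply, Ne.symm hb]
  · simp

lemma dg_single (p : Fin n) (m : ℕ) : dg (Finsupp.single p m) = m := by
  simp [dg, Finsupp.single_apply]


noncomputable def Msub (n n₁ : ℕ) (c : ℤ) (d : ℕ) : Submodule ℝ (MvPolynomial (Fin n) ℝ) :=
  Submodule.span ℝ ((fun α => monomial α (1 : ℝ)) '' {α | wt n₁ α = c ∧ dg α ≤ d})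

lemma Msub_mono (n n₁ : ℕ) (c : ℤ) {d d' : ℕ} (h : d ≤ d') : Msub n n₁ c d ≤ Msub n n₁ c d' :=
  Submodule.span_mono (Set.image_mono fun α hα => ⟨hα.1, hα.2.trans h⟩)

lemma monomial_mem_Msub {n : ℕ} (n₁ : ℕ) {c : ℤ} {d : ℕ} {α : Fin n →₀ ℕ}
    (h1 : wt n₁ α = c) (h2 : dg α ≤ d) (a : ℝ) :
    monomial α a ∈ Msub n n₁ c d := by
  have : (monomial α a : MvPolynomial (Fin n) ℝ) = a • monomial α (1 : ℝ) := by
    rw [smul_monomial]; norm_num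
  rw [this]
  exact Submodule.smul_mem _ _ (Submodule.subset_span ⟨α, ⟨h1, h2⟩, rfl⟩)

lemma helper1 {n n₁ : ℕ} {c : ℤ} {d : ℕ} {i r : Fin n}
    (hs : wt n₁ (Finsupp.single i 1) = wt n₁ (Finsupp.single r 1))
    {α : Fin n →₀ ℕ} (hw : wt n₁ α = c) (hd : dg α ≤ d) :
    (X i : MvPolynomial (Fin n) ℝ) * pderiv r (monomial α 1) ∈ Msub n n₁ c d := by
  rw [pderiv_monomial, one_mul]
  by_cases h : α r = 0
  · simp [h]
  · have hle : Finsupp.single r 1 ≤ α := Finsupp.single_le_iff.2 (Nat.one_le_iff_ne_zero.2 h)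
    have key : (α - Finsupp.single r 1) + Finsupp.single r 1 = α := tsub_add_cancel_of_le hle
    have hw' : wt n₁ (α - Finsupp.single r 1) + wt n₁ (Finsupp.single r 1) = c := by
      rw [← wt_add, key, hw]
    have hd' : dg (α - Finsupp.single r 1) + dg (Finsupp.single r 1) = dg α := by
      rw [← dg_add, key]
    have : (X i : MvPolynomial (Fin n) ℝ) * monomial (α - Finsupp.single r 1) ((α r : ℝ)) =
        monomial (Finsupp.single i 1 + (α - Finsupp.single r 1)) ((α r : ℝ)) := by
      rw [monomial_single_add, pow_one]
    rw [this]
    refine monomial_mem_Msub n₁ ?_ ?_ _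
    · rw [wt_add, hs]; omega
    · rw [dg_single] at hd'
      rw [dg_add, dg_single]
      omega

lemma stepA {n n₁ : ℕ} {c : ℤ} {d : ℕ} {T : Module.End ℝ (MvPolynomial (Fin n) ℝ)}
    (hT : T ∈ Sset n n₁) {f : MvPolynomial (Fin n) ℝ} (hf : f ∈ Msub n n₁ c d) :
    T f ∈ Msub n n₁ c (d + 2) := by
  induction hf using Submodule.span_induction with
  | zero => simp
  | add x y _ _ hx hy => rw [map_add]; exact add_mem hx hy
  | smul a x _ hx => rw [map_smul]; exact Submodule.smul_mem _ _ hx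
  | mem x hx =>
    obtain ⟨α, ⟨hw, hd⟩, rfl⟩ := hx
    rcases hT with ⟨i, r, hir, hr, rfl⟩ | ⟨i, s, hi, hs, rfl⟩ | ⟨j, s, hj, hjs, rfl⟩
    · have hi' : (i : ℕ) < n₁ := lt_trans hir hr
      have : (-(mulE (X i) * pdE r)) (monomial α 1) =
          -((X i : MvPolynomial (Fin n) ℝ) * pderiv r (monomial α 1)) := by
        simp [mulE, pdE]
      rw [this]
      refine neg_mem (helper1 ?_ hw (hd.trans (by omega)))
      rw [wt_single, wt_single, if_pos hi', if_pos hr]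
    · have : (-mulE (X i * X s)) (monomial α 1) =
          -(monomial (Finsupp.single i 1 + (Finsupp.single s 1 + α)) (1 : ℝ)) := by
        simp only [mulE, LinearMap.neg_apply, LinearMap.mulLeft_apply]
        rw [monomial_single_add, monomial_single_add, pow_one, pow_one, mul_assoc]
      rw [this]
      refine neg_mem (monomial_mem_Msub n₁ ?_ ?_ _)
      · rw [wt_add, wt_add, wt_single, wt_single, if_pos hi, if_neg (by omega), hw]; ring
      · rw [dg_add, dg_add, dg_single, dg_single]; omega
    · have hs' : n₁ ≤ (s : ℕ) := le_trans hj (le_of_lt hjs)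
      have : (mulE (X s) * pdE j) (monomial α 1) =
          (X s : MvPolynomial (Fin n) ℝ) * pderiv j (monomial α 1) := by
        simp [mulE, pdE]
      rw [this]
      refine helper1 ?_ hw (hd.trans (by omega))
      rw [wt_single, wt_single, if_neg (by omega), if_neg (by omega)]


lemma prodA {n n₁ : ℕ} {c : ℤ} {d : ℕ} (l : List (Module.End ℝ (MvPolynomial (Fin n) ℝ)))
    (hl : ∀ T ∈ l, T ∈ Sset n n₁) {f : MvPolynomial (Fin n) ℝ} (hf : f ∈ Msub n n₁ c d) :
    l.prod f ∈ Msub n n₁ c (d + 2 * l.length) := by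
  induction l with
  | nil => simpa using hf
  | cons T l ih =>
    have h1 := ih (fun T hT => hl T (List.mem_cons_of_mem _ hT))
    have h2 := stepA (hl T List.mem_cons_self) h1
    rw [List.prod_cons]
    refine Msub_mono _ _ _ (show d + 2 * l.length + 2 ≤ d + 2 * (T :: l).length by
      simp [List.length_cons]; omega) ?_
    simpa [Module.End.mul_apply] using h2

lemma Wk_le {n n₁ : ℕ} (p : Fin n) (m k : ℕ) :
    Wk n (Sset n n₁) (X p ^ m) k ≤ Msub n n₁ (wt n₁ (Finsupp.single p m)) (m + 2 * k) := by
  rw [Wk, Submodule.span_le]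
  rintro f ⟨l, hlen, hmem, rfl⟩
  have hv : (X p ^ m : MvPolynomial (Fin n) ℝ) ∈ Msub n n₁ (wt n₁ (Finsupp.single p m)) m := by
    rw [X_pow_eq_monomial]
    exact monomial_mem_Msub _ rfl (le_of_eq (dg_single p m)) 1
  exact Msub_mono _ _ _ (by omega) (prodA l hmem hv)

lemma alpha_le_dg {n : ℕ} (α : Fin n →₀ ℕ) (i : Fin n) : α i ≤ dg α :=
  Finset.single_le_sum (fun _ _ => Nat.zero_le _) (Finset.mem_univ i)

lemma Sk_finite_card {n n₁ : ℕ} (hn : 2 ≤ n) (h2 : n₁ < n) (c : ℤ) (d : ℕ) :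
    {α : Fin n →₀ ℕ | wt n₁ α = c ∧ dg α ≤ d}.Finite ∧
      Nat.card {α : Fin n →₀ ℕ | wt n₁ α = c ∧ dg α ≤ d} ≤ (d + 1) ^ (n - 1) := by
  set Sk := {α : Fin n →₀ ℕ | wt n₁ α = c ∧ dg α ≤ d} with hSk
  set j₀ : Fin n := ⟨n - 1, by omega⟩ with hj₀
  set φ : Sk → (Fin (n - 1) → Fin (d + 1)) := fun α i =>
    ⟨(α : Fin n →₀ ℕ) ⟨i, by omega⟩, by
      have := alpha_le_dg (α : Fin n →₀ ℕ) ⟨i, by omega⟩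
      have := α.2.2
      omega⟩ with hφ
  have hinj : Function.Injective φ := by
    rintro ⟨α, hα⟩ ⟨β, hβ⟩ hfe
    have heq : ∀ i : Fin n, i ≠ j₀ → α i = β i := by
      intro i hi
      have hi' : (i : ℕ) < n - 1 := by
        rcases lt_or_ge (i : ℕ) (n - 1) with h | h
        · exact h
        · exact absurd (Fin.ext (show (i : ℕ) = (j₀ : ℕ) by simp only [hj₀]; omega)) hi
      have := congrFun hfe ⟨i, hi'⟩
      simpa [hφ, Fin.ext_iff] using congrArg Fin.val this
    have hw : wt n₁ α = wt n₁ β := hα.1.trans hβ.1.symm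
    have hsplit : ∀ γ : Fin n →₀ ℕ, wt n₁ γ =
        (if (j₀ : ℕ) < n₁ then (-1 : ℤ) else 1) * γ j₀ +
          ∑ i ∈ Finset.univ.erase j₀, (if (i : ℕ) < n₁ then (-1 : ℤ) else 1) * γ i := by
      intro γ
      rw [wt, ← Finset.add_sum_erase _ _ (Finset.mem_univ j₀)]
    rw [hsplit α, hsplit β] at hw
    have hsum : ∑ i ∈ Finset.univ.erase j₀, (if (i : ℕ) < n₁ then (-1 : ℤ) else 1) * α i =
        ∑ i ∈ Finset.univ.erase j₀, (if (i : ℕ) < n₁ then (-1 : ℤ) else 1) * β i := by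
      refine Finset.sum_congr rfl fun i hi => ?_
      rw [heq i (Finset.mem_erase.1 hi).1]
    rw [hsum] at hw
    have hj : α j₀ = β j₀ := by
      rcases (ite_eq_or_eq ((j₀ : ℕ) < n₁) (-1 : ℤ) 1) with h | h <;>
        rw [h] at hw <;> omega
    refine Subtype.ext (Finsupp.ext fun i => ?_)
    by_cases hi : i = j₀
    · rw [hi, hj]
    · exact heq i hi
  have hfin : Finite Sk := Finite.of_injective φ hinj
  refine ⟨Set.toFinite _, ?_⟩
  calc Nat.card Sk ≤ Nat.card (Fin (n - 1) → Fin (d + 1)) := Nat.card_le_card_of_injective φ hinj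
    _ = (d + 1) ^ (n - 1) := by simp [Nat.card_eq_fintype_card]


lemma Msub_finite_finrank {n n₁ : ℕ} (hn : 2 ≤ n) (h2 : n₁ < n) (c : ℤ) (d : ℕ) :
    Module.Finite ℝ (Msub n n₁ c d) ∧
      Module.finrank ℝ (Msub n n₁ c d) ≤ (d + 1) ^ (n - 1) := by
  obtain ⟨hfin, hcard⟩ := Sk_finite_card hn h2 c d
  have himg : (fun α => monomial α (1 : ℝ)) '' {α : Fin n →₀ ℕ | wt n₁ α = c ∧ dg α ≤ d} =
      ↑(hfin.toFinset.image fun α => monomial α (1 : ℝ)) := by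
    rw [Finset.coe_image, Set.Finite.coe_toFinset]
  constructor
  · rw [Msub, himg]
    exact FiniteDimensional.span_of_finite ℝ (Finset.finite_toSet _)
  · rw [Msub, himg]
    refine le_trans (finrank_span_finset_le_card _) ?_
    refine le_trans (Finset.card_image_le) ?_
    have : hfin.toFinset.card = Nat.card {α : Fin n →₀ ℕ | wt n₁ α = c ∧ dg α ≤ d} := by
      rw [Nat.card_coe_set_eq, Set.ncard_eq_toFinset_card _ hfin]
    omega


lemma dg_eq_zero {n : ℕ} {α : Fin n →₀ ℕ} (h : dg α = 0) : α = 0 := by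
  refine Finsupp.ext fun i => ?_
  have := alpha_le_dg α i
  simp only [Finsupp.coe_zero, Pi.zero_apply]
  omega

lemma listB {n n₁ : ℕ} (j : ℕ) (β γ : Fin n →₀ ℕ)
    (hβ : ∀ i ∈ β.support, (i : ℕ) < n₁) (hγ : ∀ s ∈ γ.support, n₁ ≤ (s : ℕ))
    (hdβ : dg β = j) (hdγ : dg γ = j) :
    ∃ l : List (Module.End ℝ (MvPolynomial (Fin n) ℝ)),
      l.length = j ∧ (∀ T ∈ l, T ∈ Sset n n₁) ∧
      ∀ f : MvPolynomial (Fin n) ℝ,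
        l.prod f = ((-1 : ℝ) ^ j) • (monomial (β + γ) 1 * f) := by
  induction j generalizing β γ with
  | zero =>
    refine ⟨[], rfl, by simp, fun f => ?_⟩
    rw [dg_eq_zero hdβ, dg_eq_zero hdγ]
    simp [monomial_zero']
  | succ j ih =>
    have hβne : β.support.Nonempty := by
      rw [Finsupp.support_nonempty_iff]
      intro h; rw [h] at hdβ; simp [dg] at hdβ
    have hγne : γ.support.Nonempty := by
      rw [Finsupp.support_nonempty_iff]
      intro h; rw [h] at hdγ; simp [dg] at hdγ
    obtain ⟨i, hi⟩ := hβne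
    obtain ⟨s, hs⟩ := hγne
    have hile : Finsupp.single i 1 ≤ β :=
      Finsupp.single_le_iff.2 (Nat.one_le_iff_ne_zero.2 (Finsupp.mem_support_iff.1 hi))
    have hsle : Finsupp.single s 1 ≤ γ :=
      Finsupp.single_le_iff.2 (Nat.one_le_iff_ne_zero.2 (Finsupp.mem_support_iff.1 hs))
    have hkeyβ : (β - Finsupp.single i 1) + Finsupp.single i 1 = β := tsub_add_cancel_of_le hile
    have hkeyγ : (γ - Finsupp.single s 1) + Finsupp.single s 1 = γ := tsub_add_cancel_of_le hsle
    have hdβ' : dg (β - Finsupp.single i 1) = j := by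
      have := dg_add (β - Finsupp.single i 1) (Finsupp.single i 1)
      rw [hkeyβ, dg_single] at this; omega
    have hdγ' : dg (γ - Finsupp.single s 1) = j := by
      have := dg_add (γ - Finsupp.single s 1) (Finsupp.single s 1)
      rw [hkeyγ, dg_single] at this; omega
    obtain ⟨l', hlen, hmem, hprod⟩ := ih (β - Finsupp.single i 1) (γ - Finsupp.single s 1)
      (fun x hx => hβ x (Finsupp.support_tsub hx)) (fun x hx => hγ x (Finsupp.support_tsub hx))
      hdβ' hdγ'
    refine ⟨(-mulE (X i * X s)) :: l', by simp [hlen], ?_, fun f => ?_⟩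
    · intro T hT
      rcases List.mem_cons.1 hT with rfl | hT
      · exact Or.inr (Or.inl ⟨i, s, hβ i hi, hγ s hs, rfl⟩)
      · exact hmem T hT
    · rw [List.prod_cons, Module.End.mul_apply, hprod f]
      have : (-mulE (X i * X s) : Module.End ℝ (MvPolynomial (Fin n) ℝ))
          (((-1 : ℝ) ^ j) • (monomial ((β - Finsupp.single i 1) + (γ - Finsupp.single s 1)) 1 * f)) =
          ((-1 : ℝ) ^ (j + 1)) • (X i * X s *
            (monomial ((β - Finsupp.single i 1) + (γ - Finsupp.single s 1)) 1 * f)) := by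
        simp only [mulE, LinearMap.neg_apply, LinearMap.mulLeft_apply, mul_smul_comm]
        rw [← neg_smul, pow_succ]
        ring_nf
      rw [this]
      congr 1
      have hXmon : ∀ a : Fin n, (X a : MvPolynomial (Fin n) ℝ) = monomial (Finsupp.single a 1) 1 :=
        fun a => (pow_one (X a)).symm.trans X_pow_eq_monomial
      have hXX : (X i * X s : MvPolynomial (Fin n) ℝ) *
          monomial ((β - Finsupp.single i 1) + (γ - Finsupp.single s 1)) 1 =
          monomial (β + γ) 1 := by
        rw [hXmon i, hXmon s, monomial_mul, monomial_mul, one_mul, one_mul]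
        conv_rhs => rw [← hkeyβ, ← hkeyγ]
        congr 1
        simp only [add_comm, add_left_comm, add_assoc]
      rw [← mul_assoc, hXX]

lemma monomial_mem_Wk {n n₁ : ℕ} (p : Fin n) (m k : ℕ) (β γ : Fin n →₀ ℕ)
    (hβ : ∀ i ∈ β.support, (i : ℕ) < n₁) (hγ : ∀ s ∈ γ.support, n₁ ≤ (s : ℕ))
    (hd : dg β = dg γ) (hk : dg β ≤ k) :
    (monomial (β + γ + Finsupp.single p m) (1 : ℝ)) ∈ Wk n (Sset n n₁) (X p ^ m) k := by
  obtain ⟨l, hlen, hmem, hprod⟩ := listB (dg β) β γ hβ hγ rfl hd.symm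
  have hgen : l.prod (X p ^ m) ∈ Wk n (Sset n n₁) (X p ^ m) k :=
    Submodule.subset_span ⟨l, by omega, hmem, rfl⟩
  have heq : l.prod ((X p : MvPolynomial (Fin n) ℝ) ^ m) =
      ((-1 : ℝ) ^ dg β) • monomial (β + γ + Finsupp.single p m) 1 := by
    rw [hprod, X_pow_eq_monomial, monomial_mul, mul_one]
  have : (monomial (β + γ + Finsupp.single p m) (1 : ℝ)) =
      ((-1 : ℝ) ^ dg β) • l.prod ((X p : MvPolynomial (Fin n) ℝ) ^ m) := by
    rw [heq, smul_smul, ← pow_add, ← two_mul, pow_mul, neg_one_sq, one_pow, one_smul]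
  rw [this]
  exact Submodule.smul_mem _ _ hgen


def tf (n M : ℕ) (t : Fin (n - 1) → Fin M) (j : ℕ) : ℕ :=
  if h : j < n - 1 then (t ⟨j, h⟩ : ℕ) else 0

def bg (n n₁ M : ℕ) (t : Fin (n - 1) → Fin M) (i : ℕ) : ℕ :=
  if i < n₁ then n * M + tf n M t i else 0

def Af (n n₁ M : ℕ) (t : Fin (n - 1) → Fin M) : ℕ := ∑ x ∈ Finset.range n, bg n n₁ M t x

def Bf (n n₁ M : ℕ) (t : Fin (n - 1) → Fin M) : ℕ :=
  ∑ x ∈ Finset.range n, if n₁ ≤ x ∧ x < n - 1 then tf n M t x else 0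

def gg (n n₁ M : ℕ) (t : Fin (n - 1) → Fin M) (x : ℕ) : ℕ :=
  if n₁ ≤ x ∧ x < n - 1 then tf n M t x
  else if x = n - 1 then Af n n₁ M t - Bf n n₁ M t else 0

noncomputable def bF (n n₁ M : ℕ) (t : Fin (n - 1) → Fin M) : Fin n →₀ ℕ :=
  Finsupp.equivFunOnFinite.symm (fun i : Fin n => bg n n₁ M t i.val)

noncomputable def gF (n n₁ M : ℕ) (t : Fin (n - 1) → Fin M) : Fin n →₀ ℕ :=
  Finsupp.equivFunOnFinite.symm (fun i : Fin n => gg n n₁ M t i.val)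

lemma bF_apply (n n₁ M : ℕ) (t : Fin (n - 1) → Fin M) (i : Fin n) :
    bF n n₁ M t i = bg n n₁ M t i.val := rfl

lemma gF_apply (n n₁ M : ℕ) (t : Fin (n - 1) → Fin M) (i : Fin n) :
    gF n n₁ M t i = gg n n₁ M t i.val := rfl

section params
variable {n n₁ M : ℕ} (hn : 2 ≤ n) (h1 : 1 ≤ n₁) (h2 : n₁ < n) (t : Fin (n - 1) → Fin M)

lemma tf_le (t : Fin (n - 1) → Fin M) (j : ℕ) (hM : 1 ≤ M) : tf n M t j ≤ M - 1 := by
  rw [tf]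
  split
  · have := (t ⟨j, by omega⟩).2; omega
  · omega

include hn h1 h2

lemma Bf_le (hM : 1 ≤ M) : Bf n n₁ M t ≤ n * (M - 1) := by
  rw [Bf]
  calc _ ≤ ∑ _x ∈ Finset.range n, (M - 1) := by
        refine Finset.sum_le_sum fun x _ => ?_
        split
        · exact tf_le t x hM
        · omega
    _ = n * (M - 1) := by rw [Finset.sum_const, Finset.card_range, smul_eq_mul, mul_comm]

lemma Af_ge : n * M ≤ Af n n₁ M t := by
  have h0 : bg n n₁ M t 0 = n * M + tf n M t 0 := if_pos h1
  calc n * M ≤ bg n n₁ M t 0 := by omega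
    _ ≤ Af n n₁ M t := Finset.single_le_sum (f := fun x => bg n n₁ M t x)
        (fun x _ => Nat.zero_le _) (Finset.mem_range.2 (by omega))

lemma Bf_le_Af (hM : 1 ≤ M) : Bf n n₁ M t ≤ Af n n₁ M t := by
  have hb := Bf_le hn h1 h2 t hM
  have ha := Af_ge hn h1 h2 t
  have : n * (M - 1) ≤ n * M := Nat.mul_le_mul_left n (by omega)
  omega

lemma dg_bF : dg (bF n n₁ M t) = Af n n₁ M t := by
  rw [dg]
  simp only [bF_apply]
  rw [Fin.sum_univ_eq_sum_range (fun i => bg n n₁ M t i) n, Af]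

lemma dg_gF (hM : 1 ≤ M) : dg (gF n n₁ M t) = Af n n₁ M t := by
  rw [dg]
  simp only [gF_apply]
  rw [Fin.sum_univ_eq_sum_range (fun i => gg n n₁ M t i) n]
  have hsum : ∀ f : ℕ → ℕ, ∑ x ∈ Finset.range n, f x =
      ∑ x ∈ Finset.range (n - 1), f x + f (n - 1) := by
    intro f
    rw [← Finset.sum_range_succ, Nat.sub_add_cancel (by omega)]
  rw [hsum]
  have hlast : gg n n₁ M t (n - 1) = Af n n₁ M t - Bf n n₁ M t := by
    rw [gg, if_neg (by omega), if_pos rfl]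
  have hrest : ∑ x ∈ Finset.range (n - 1), gg n n₁ M t x = Bf n n₁ M t := by
    rw [Bf, hsum, if_neg (by omega), add_zero]
    refine Finset.sum_congr rfl fun x hx => ?_
    rw [Finset.mem_range] at hx
    rw [gg]
    by_cases hc : n₁ ≤ x ∧ x < n - 1
    · rw [if_pos hc, if_pos hc]
    · rw [if_neg hc, if_neg hc, if_neg (by omega)]
  rw [hlast, hrest]
  have := Bf_le_Af hn h1 h2 t hM
  omega

lemma sup_bF : ∀ i ∈ (bF n n₁ M t).support, (i : ℕ) < n₁ := by
  intro i hi
  rw [Finsupp.mem_support_iff, bF_apply, bg] at hi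
  by_contra hc
  rw [if_neg hc] at hi
  exact hi rfl

lemma sup_gF : ∀ s ∈ (gF n n₁ M t).support, n₁ ≤ (s : ℕ) := by
  intro s hs
  rw [Finsupp.mem_support_iff, gF_apply, gg] at hs
  by_cases hc : n₁ ≤ (s : ℕ) ∧ (s : ℕ) < n - 1
  · exact hc.1
  · rw [if_neg hc] at hs
    by_cases hc2 : (s : ℕ) = n - 1
    · omega
    · rw [if_neg hc2] at hs; exact absurd rfl hs

lemma Af_le (hM : 1 ≤ M) : Af n n₁ M t ≤ n * (n + 1) * M := by
  have hstep : Af n n₁ M t ≤ ∑ x ∈ Finset.range n, (if x < n₁ then n * M + M else 0) := by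
    rw [Af]
    refine Finset.sum_le_sum fun x _ => ?_
    rw [bg]
    have := tf_le t x hM
    split <;> omega
  have hsplit : ∑ x ∈ Finset.range n, (if x < n₁ then n * M + M else 0) ≤ n₁ * (n * M + M) := by
    rw [Finset.range_eq_Ico, ← Finset.sum_Ico_consecutive _ (Nat.zero_le n₁) (le_of_lt h2)]
    have e1 : ∑ x ∈ Finset.Ico 0 n₁, (if x < n₁ then n * M + M else 0) = n₁ * (n * M + M) := by
      rw [Finset.sum_congr rfl fun x hx => if_pos (Finset.mem_Ico.1 hx).2]
      rw [Finset.sum_const, Nat.card_Ico, Nat.sub_zero, smul_eq_mul]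
    have e2 : ∑ x ∈ Finset.Ico n₁ n, (if x < n₁ then n * M + M else 0) = 0 := by
      refine Finset.sum_eq_zero fun x hx => if_neg (by
        have := (Finset.mem_Ico.1 hx).1; omega)
    omega
  have hfin : n₁ * (n * M + M) ≤ n * (n + 1) * M := by
    have : n₁ * (n * M + M) = n₁ * ((n + 1) * M) := by ring
    rw [this]
    calc n₁ * ((n + 1) * M) ≤ n * ((n + 1) * M) := Nat.mul_le_mul_right _ (by omega)
      _ = n * (n + 1) * M := by ring
  omega

lemma eF_inj (p : Fin n) (m : ℕ) :
    Function.Injective (fun t : Fin (n - 1) → Fin M =>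
      bF n n₁ M t + gF n n₁ M t + Finsupp.single p m) := by
  intro t t' heq
  simp only at heq
  funext q
  have h := DFunLike.congr_fun heq (⟨q.val, by omega⟩ : Fin n)
  simp only [Finsupp.add_apply, bF_apply, gF_apply] at h
  have htf : ∀ u : Fin (n - 1) → Fin M, tf n M u q.val = (u q : ℕ) := by
    intro u; rw [tf, dif_pos q.2, Fin.eta]
  have hq2 : (q : ℕ) < n - 1 := q.2
  by_cases hc : (q : ℕ) < n₁
  · rw [bg, bg, if_pos hc, if_pos hc, htf, htf, gg, gg,
      if_neg (show ¬(n₁ ≤ (q : ℕ) ∧ (q : ℕ) < n - 1) by omega),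
      if_neg (show ¬(n₁ ≤ (q : ℕ) ∧ (q : ℕ) < n - 1) by omega),
      if_neg (show ¬((q : ℕ) = n - 1) by omega),
      if_neg (show ¬((q : ℕ) = n - 1) by omega)] at h
    exact Fin.ext (by omega)
  · rw [bg, bg, if_neg hc, if_neg hc, gg, gg,
      if_pos (show n₁ ≤ (q : ℕ) ∧ (q : ℕ) < n - 1 from ⟨by omega, q.2⟩),
      if_pos (show n₁ ≤ (q : ℕ) ∧ (q : ℕ) < n - 1 from ⟨by omega, q.2⟩), htf, htf] at h
    exact Fin.ext (by omega)

lemma lower_bound (p : Fin n) (m k : ℕ) (hM : 1 ≤ M) (hMk : n * (n + 1) * M ≤ k) :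
    M ^ (n - 1) ≤ Module.finrank ℝ (Wk n (Sset n n₁) (X p ^ m) k) := by
  classical
  set e : (Fin (n - 1) → Fin M) → (Fin n →₀ ℕ) :=
    fun t => bF n n₁ M t + gF n n₁ M t + Finsupp.single p m with he
  have heinj : Function.Injective e := eF_inj hn h1 h2 p m
  have hLI : LinearIndependent ℝ (fun t => (monomial (e t) (1 : ℝ))) := by
    have hb := ((basisMonomials (Fin n) ℝ).linearIndependent).comp e heinj
    rwa [coe_basisMonomials] at hb
  have hle : Submodule.span ℝ (Set.range fun t => (monomial (e t) (1 : ℝ))) ≤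
      Wk n (Sset n n₁) (X p ^ m) k := by
    rw [Submodule.span_le]
    rintro f ⟨t, rfl⟩
    exact monomial_mem_Wk p m k _ _ (sup_bF hn h1 h2 t) (sup_gF hn h1 h2 t)
      (by rw [dg_bF hn h1 h2, dg_gF hn h1 h2 t hM])
      (by rw [dg_bF hn h1 h2]; exact (Af_le hn h1 h2 t hM).trans hMk)
  haveI : Module.Finite ℝ (Msub n n₁ (wt n₁ (Finsupp.single p m)) (m + 2 * k)) :=
    (Msub_finite_finrank hn h2 _ _).1
  haveI : Module.Finite ℝ (Wk n (Sset n n₁) (X p ^ m) k) :=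
    Submodule.finiteDimensional_of_le (Wk_le p m k)
  have hmono := Submodule.finrank_mono hle
  rw [finrank_span_eq_card hLI] at hmono
  simpa using hmono

end params

lemma main_gen {n n₁ : ℕ} (hn : 2 ≤ n) (h1 : 1 ≤ n₁) (h2 : n₁ < n) (p : Fin n) (m : ℕ) :
    ∃ c₁ c₂ : ℝ, 0 < c₁ ∧ 0 < c₂ ∧ ∃ K : ℕ, ∀ k ≥ K,
      c₁ * (k : ℝ) ^ (n - 1) ≤
        (Module.finrank ℝ (Wk n (Sset n n₁) (X p ^ m) k) : ℝ) ∧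
      (Module.finrank ℝ (Wk n (Sset n n₁) (X p ^ m) k) : ℝ) ≤
        c₂ * (k : ℝ) ^ (n - 1) := by
  classical
  set C : ℕ := n * (n + 1) with hC
  have hCpos : 0 < C := by positivity
  refine ⟨(1 / (2 * C : ℝ)) ^ (n - 1), 3 ^ (n - 1), by positivity, by positivity,
    max (2 * C) (m + 1), fun k hk => ?_⟩
  have hk1 : 2 * C ≤ k := le_trans (le_max_left _ _) hk
  have hk2 : m + 1 ≤ k := le_trans (le_max_right _ _) hk
  set M : ℕ := k / C with hM
  have hM1 : 1 ≤ M := (Nat.one_le_div_iff hCpos).2 (by omega)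
  have hMk : C * M ≤ k := by rw [mul_comm]; exact Nat.div_mul_le_self k C
  have hk2CM : k ≤ 2 * (C * M) := by
    have hdm := Nat.div_add_mod k C
    have hmod : k % C < C := Nat.mod_lt k hCpos
    have hCM : C ≤ C * M := Nat.le_mul_of_pos_right C (by omega)
    calc k = C * M + k % C := by rw [hM]; omega
      _ ≤ C * M + C := by omega
      _ ≤ C * M + C * M := by omega
      _ = 2 * (C * M) := by ring
  constructor
  · -- lower bound
    have hlow : M ^ (n - 1) ≤ Module.finrank ℝ (Wk n (Sset n n₁) (X p ^ m) k) :=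
      lower_bound hn h1 h2 p m k hM1 hMk
    have hbase : (1 / (2 * C : ℝ)) * k = (k : ℝ) / (2 * C) := by ring
    rw [← mul_pow, hbase]
    have hdiv : (k : ℝ) / (2 * C) ≤ (M : ℝ) := by
      rw [div_le_iff₀ (by positivity)]
      have : (k : ℝ) ≤ 2 * ((C : ℝ) * M) := by exact_mod_cast hk2CM
      linarith
    calc ((k : ℝ) / (2 * C)) ^ (n - 1) ≤ (M : ℝ) ^ (n - 1) :=
          pow_le_pow_left₀ (by positivity) hdiv _
      _ = ((M ^ (n - 1) : ℕ) : ℝ) := by push_cast; ring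
      _ ≤ _ := by exact_mod_cast hlow
  · -- upper bound
    obtain ⟨hfin, hrank⟩ := Msub_finite_finrank hn h2 (wt n₁ (Finsupp.single p m)) (m + 2 * k)
    haveI := hfin
    have hup : Module.finrank ℝ (Wk n (Sset n n₁) (X p ^ m) k) ≤ (m + 2 * k + 1) ^ (n - 1) :=
      le_trans (Submodule.finrank_mono (Wk_le p m k)) hrank
    have h3k : (m + 2 * k + 1) ^ (n - 1) ≤ (3 * k) ^ (n - 1) :=
      Nat.pow_le_pow_left (by omega) _
    calc (Module.finrank ℝ (Wk n (Sset n n₁) (X p ^ m) k) : ℝ)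
        ≤ (((3 * k) ^ (n - 1) : ℕ) : ℝ) := by exact_mod_cast le_trans hup h3k
      _ = 3 ^ (n - 1) * (k : ℝ) ^ (n - 1) := by push_cast; rw [mul_pow]

end St16

/-- (i) v = x_{n₁}^{m₁} (0-based index n₁−1) for m₁ ≥ 1, and
(ii) v = x_{n₁+1}^{m₂} (0-based index n₁) for m₂ ∈ ℕ; both spans grow like k^{n−1}. -/
theorem stmt_16 (n n₁ : ℕ) (hn : 2 ≤ n) (h1 : 1 ≤ n₁) (h2 : n₁ < n) :
    (∀ m₁ : ℕ, 1 ≤ m₁ →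
      ∃ c₁ c₂ : ℝ, 0 < c₁ ∧ 0 < c₂ ∧ ∃ K : ℕ, ∀ k ≥ K,
        c₁ * (k : ℝ) ^ (n - 1) ≤
          (Module.finrank ℝ (Wk n (Sset n n₁)
            (X (⟨n₁ - 1, by omega⟩ : Fin n) ^ m₁) k) : ℝ) ∧
        (Module.finrank ℝ (Wk n (Sset n n₁)
            (X (⟨n₁ - 1, by omega⟩ : Fin n) ^ m₁) k) : ℝ) ≤
          c₂ * (k : ℝ) ^ (n - 1)) ∧
    (∀ m₂ : ℕ,
      ∃ c₁ c₂ : ℝ, 0 < c₁ ∧ 0 < c₂ ∧ ∃ K : ℕ, ∀ k ≥ K,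
        c₁ * (k : ℝ) ^ (n - 1) ≤
          (Module.finrank ℝ (Wk n (Sset n n₁)
            (X (⟨n₁, h2⟩ : Fin n) ^ m₂) k) : ℝ) ∧
        (Module.finrank ℝ (Wk n (Sset n n₁)
            (X (⟨n₁, h2⟩ : Fin n) ^ m₂) k) : ℝ) ≤
          c₂ * (k : ℝ) ^ (n - 1)) := by
  constructor
  · intro m₁ _
    obtain ⟨c₁, c₂, hc₁, hc₂, K, hK⟩ :=
      St16.main_gen hn h1 h2 (⟨n₁ - 1, by omega⟩ : Fin n) m₁
    exact ⟨c₁, c₂, hc₁, hc₂, K, hK⟩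
  · intro m₂
    obtain ⟨c₁, c₂, hc₁, hc₂, K, hK⟩ :=
      St16.main_gen hn h1 h2 (⟨n₁, h2⟩ : Fin n) m₂
    exact ⟨c₁, c₂, hc₁, hc₂, K, hK⟩
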